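/- Let ρ > 0, ν ∈ ℝ with cos(πν) ≠ 0, and let r' ∈ EuclideanSpace ℝ (Fin 3) be nonzero. Then ‖r‖ · G_ν(r, r') tends to −(√(‖r'‖² + ρ²)/(4π cos(πν) ‖r'‖)) · sin((ν + 1/2) · arccos((ρ² − ‖r'‖²)/(ρ² + ‖r'‖²))) as ‖r‖ → ∞ (i.e. along the cobounded filter on EuclideanSpace ℝ (Fin 3)). -/

import Mathlib

/-- The three-dimensional Maxwell fish-eye Green's function. -/
noncomputable def fisheyeGreen (ρ ν : ℝ) (r r' : EuclideanSpace ℝ (Fin 3)) : ℝ :=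
  -(1 / (4 * Real.pi * Real.cos (Real.pi * ν)))
    * (Real.sqrt ((‖r‖ ^ 2 + ρ ^ 2) * (‖r'‖ ^ 2 + ρ ^ 2))
        / (‖r - r'‖
            * Real.sqrt (‖r‖ ^ 2 * ‖r'‖ ^ 2 + 2 * ρ ^ 2 * (inner ℝ r r' : ℝ) + ρ ^ 4)))
    * Real.sin ((ν + 1 / 2)
        * Real.arccos (-1 + 2 * ρ ^ 2 * ‖r - r'‖ ^ 2
            / ((‖r‖ ^ 2 + ρ ^ 2) * (‖r'‖ ^ 2 + ρ ^ 2))))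

/-- Auxiliary rescaled form of the fish-eye Green function. -/
noncomputable def fisheyeAux (ρ ν k : ℝ) (p : ℝ × ℝ × ℝ) : ℝ :=
  -(1 / (4 * Real.pi * Real.cos (Real.pi * ν)))
    * (Real.sqrt ((1 + ρ ^ 2 * p.1 ^ 2) * (k ^ 2 + ρ ^ 2))
        / (p.2.2 * Real.sqrt (k ^ 2 + 2 * ρ ^ 2 * p.2.1 + ρ ^ 4 * p.1 ^ 2)))
    * Real.sin ((ν + 1 / 2)
        * Real.arccos (-1 + 2 * ρ ^ 2 * p.2.2 ^ 2
            / ((1 + ρ ^ 2 * p.1 ^ 2) * (k ^ 2 + ρ ^ 2))))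

theorem fisheye_green_decay_at_infinity
    (ρ ν : ℝ) (hρ : 0 < ρ) (hν : Real.cos (Real.pi * ν) ≠ 0)
    (r' : EuclideanSpace ℝ (Fin 3)) (hr' : r' ≠ 0) :
    Filter.Tendsto (fun r => ‖r‖ * fisheyeGreen ρ ν r r')
      (Bornology.cobounded (EuclideanSpace ℝ (Fin 3)))
      (nhds (-(Real.sqrt (‖r'‖ ^ 2 + ρ ^ 2)
              / (4 * Real.pi * Real.cos (Real.pi * ν) * ‖r'‖))
            * Real.sin ((ν + 1 / 2)
                * Real.arccos ((ρ ^ 2 - ‖r'‖ ^ 2) / (ρ ^ 2 + ‖r'‖ ^ 2))))) := by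
  set L := Bornology.cobounded (EuclideanSpace ℝ (Fin 3)) with hL
  have hn' : 0 < ‖r'‖ := norm_pos_iff.mpr hr'
  have hK : 0 < ‖r'‖ ^ 2 + ρ ^ 2 := by positivity
  have h1 : Filter.Tendsto (fun r : EuclideanSpace ℝ (Fin 3) => ‖r‖) L Filter.atTop :=
    tendsto_norm_cobounded_atTop
  have ht : Filter.Tendsto (fun r : EuclideanSpace ℝ (Fin 3) => ‖r‖⁻¹) L (nhds 0) :=
    tendsto_inv_atTop_zero.comp h1
  have hev : ∀ᶠ r in L, (0:ℝ) < ‖r‖ := h1.eventually (Filter.eventually_gt_atTop 0)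
  have hbound : Filter.Tendsto (fun r : EuclideanSpace ℝ (Fin 3) => ‖r'‖ * ‖r‖⁻¹) L (nhds 0) := by
    simpa using ht.const_mul ‖r'‖
  have hu : Filter.Tendsto
      (fun r : EuclideanSpace ℝ (Fin 3) => (inner ℝ r r' : ℝ) / ‖r‖ ^ 2) L (nhds 0) := by
    apply squeeze_zero_norm' _ hbound
    filter_upwards [hev] with r hr
    have hb : |(inner ℝ r r' : ℝ)| ≤ ‖r‖ * ‖r'‖ := abs_real_inner_le_norm r r'
    rw [Real.norm_eq_abs, abs_div, abs_of_nonneg (by positivity : (0:ℝ) ≤ ‖r‖ ^ 2),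
      div_le_iff₀ (by positivity)]
    calc |(inner ℝ r r' : ℝ)| ≤ ‖r‖ * ‖r'‖ := hb
      _ = ‖r'‖ * ‖r‖⁻¹ * ‖r‖ ^ 2 := by field_simp
  have hs : Filter.Tendsto
      (fun r : EuclideanSpace ℝ (Fin 3) => ‖r - r'‖ / ‖r‖) L (nhds 1) := by
    have h0 : Filter.Tendsto
        (fun r : EuclideanSpace ℝ (Fin 3) => ‖r - r'‖ / ‖r‖ - 1) L (nhds 0) := by
      apply squeeze_zero_norm' _ hbound
      filter_upwards [hev] with r hr
      have hb : |‖r - r'‖ - ‖r‖| ≤ ‖r'‖ := by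
        have := abs_norm_sub_norm_le (r - r') r
        simpa using this
      rw [Real.norm_eq_abs]
      have : ‖r - r'‖ / ‖r‖ - 1 = (‖r - r'‖ - ‖r‖) / ‖r‖ := by field_simp
      rw [this, abs_div, abs_of_pos hr, div_le_iff₀ hr]
      calc |‖r - r'‖ - ‖r‖| ≤ ‖r'‖ := hb
        _ = ‖r'‖ * ‖r‖⁻¹ * ‖r‖ := by field_simp
    have := h0.add_const 1
    simpa using this
  have hp : Filter.Tendsto
      (fun r : EuclideanSpace ℝ (Fin 3) =>
        ((‖r‖⁻¹, ((inner ℝ r r' : ℝ) / ‖r‖ ^ 2, ‖r - r'‖ / ‖r‖)) : ℝ × ℝ × ℝ))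
      L (nhds ((0, (0, 1)) : ℝ × ℝ × ℝ)) :=
    ht.prodMk_nhds (hu.prodMk_nhds hs)
  have hF : ContinuousAt (fisheyeAux ρ ν ‖r'‖) ((0, (0, 1)) : ℝ × ℝ × ℝ) := by
    have c1 : Continuous fun p : ℝ × ℝ × ℝ =>
        Real.sqrt ((1 + ρ ^ 2 * p.1 ^ 2) * (‖r'‖ ^ 2 + ρ ^ 2)) := by fun_prop
    have c2 : Continuous fun p : ℝ × ℝ × ℝ =>
        p.2.2 * Real.sqrt (‖r'‖ ^ 2 + 2 * ρ ^ 2 * p.2.1 + ρ ^ 4 * p.1 ^ 2) := by fun_prop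
    have hc2 : (fun p : ℝ × ℝ × ℝ =>
        p.2.2 * Real.sqrt (‖r'‖ ^ 2 + 2 * ρ ^ 2 * p.2.1 + ρ ^ 4 * p.1 ^ 2))
        ((0, (0, 1)) : ℝ × ℝ × ℝ) ≠ 0 := by
      have : ‖r'‖ ^ 2 + 2 * ρ ^ 2 * (0:ℝ) + ρ ^ 4 * (0:ℝ) ^ 2 = ‖r'‖ ^ 2 := by ring
      simp only [this]
      rw [Real.sqrt_sq hn'.le]
      simpa using hn'.ne'
    have c3 : ContinuousAt (fun p : ℝ × ℝ × ℝ =>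
        -1 + 2 * ρ ^ 2 * p.2.2 ^ 2 / ((1 + ρ ^ 2 * p.1 ^ 2) * (‖r'‖ ^ 2 + ρ ^ 2)))
        ((0, (0, 1)) : ℝ × ℝ × ℝ) := by
      apply ContinuousAt.add continuousAt_const
      apply ContinuousAt.div (by fun_prop) (by fun_prop)
      show (1 + ρ ^ 2 * (0:ℝ) ^ 2) * (‖r'‖ ^ 2 + ρ ^ 2) ≠ 0
      positivity
    unfold fisheyeAux
    exact ((continuousAt_const.mul (c1.continuousAt.div c2.continuousAt hc2)).mul
      (Real.continuous_sin.continuousAt.comp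
        (continuousAt_const.mul (Real.continuous_arccos.continuousAt.comp c3))))
  have hT := (hF.tendsto).comp hp
  have hval : fisheyeAux ρ ν ‖r'‖ ((0, (0, 1)) : ℝ × ℝ × ℝ)
      = -(Real.sqrt (‖r'‖ ^ 2 + ρ ^ 2) / (4 * Real.pi * Real.cos (Real.pi * ν) * ‖r'‖))
          * Real.sin ((ν + 1 / 2)
              * Real.arccos ((ρ ^ 2 - ‖r'‖ ^ 2) / (ρ ^ 2 + ‖r'‖ ^ 2))) := by
    unfold fisheyeAux
    have e1 : (1 + ρ ^ 2 * (0:ℝ) ^ 2) * (‖r'‖ ^ 2 + ρ ^ 2) = ‖r'‖ ^ 2 + ρ ^ 2 := by ring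
    have e2 : ‖r'‖ ^ 2 + 2 * ρ ^ 2 * (0:ℝ) + ρ ^ 4 * (0:ℝ) ^ 2 = ‖r'‖ ^ 2 := by ring
    simp only [e1, e2]
    rw [Real.sqrt_sq hn'.le]
    have e3 : -1 + 2 * ρ ^ 2 * (1:ℝ) ^ 2 / (‖r'‖ ^ 2 + ρ ^ 2)
        = (ρ ^ 2 - ‖r'‖ ^ 2) / (ρ ^ 2 + ‖r'‖ ^ 2) := by
      field_simp
      ring
    rw [e3]
    ring
  rw [← hval]
  apply hT.congr'
  have hev2 : ∀ᶠ r in L, max ‖r'‖ (ρ ^ 2 / ‖r'‖) < ‖r‖ :=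
    h1.eventually (Filter.eventually_gt_atTop _)
  filter_upwards [hev2] with r hr
  have hR : 0 < ‖r‖ := lt_of_le_of_lt (le_trans hn'.le (le_max_left _ _)) hr
  have hrn : ‖r'‖ < ‖r‖ := lt_of_le_of_lt (le_max_left _ _) hr
  have hrr : 0 < ‖r - r'‖ := by
    have := norm_sub_norm_le r r'
    linarith
  have hρn : ρ ^ 2 < ‖r‖ * ‖r'‖ := by
    have h := lt_of_le_of_lt (le_max_right _ _) hr
    rw [div_lt_iff₀ hn'] at h
    linarith [h]
  have hD : 0 < ‖r‖ ^ 2 * ‖r'‖ ^ 2 + 2 * ρ ^ 2 * (inner ℝ r r' : ℝ) + ρ ^ 4 := by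
    have hb := abs_real_inner_le_norm r r'
    have hb2 := abs_le.mp hb
    nlinarith [sq_nonneg (‖r‖ * ‖r'‖ - ρ ^ 2), hb2.1, hb2.2]
  show fisheyeAux ρ ν ‖r'‖ (‖r‖⁻¹, ((inner ℝ r r' : ℝ) / ‖r‖ ^ 2, ‖r - r'‖ / ‖r‖))
      = ‖r‖ * fisheyeGreen ρ ν r r'
  unfold fisheyeAux fisheyeGreen
  simp only
  have e1 : (1 + ρ ^ 2 * (‖r‖⁻¹) ^ 2) * (‖r'‖ ^ 2 + ρ ^ 2)
      = ((‖r‖ ^ 2 + ρ ^ 2) * (‖r'‖ ^ 2 + ρ ^ 2)) / ‖r‖ ^ 2 := by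
    field_simp
  have e2 : ‖r'‖ ^ 2 + 2 * ρ ^ 2 * ((inner ℝ r r' : ℝ) / ‖r‖ ^ 2) + ρ ^ 4 * (‖r‖⁻¹) ^ 2
      = (‖r‖ ^ 2 * ‖r'‖ ^ 2 + 2 * ρ ^ 2 * (inner ℝ r r' : ℝ) + ρ ^ 4) / ‖r‖ ^ 2 := by
    field_simp
  rw [e1, e2, Real.sqrt_div (by positivity) _, Real.sqrt_div hD.le _,
    Real.sqrt_sq hR.le]
  have e3 : -1 + 2 * ρ ^ 2 * (‖r - r'‖ / ‖r‖) ^ 2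
        / ((‖r‖ ^ 2 + ρ ^ 2) * (‖r'‖ ^ 2 + ρ ^ 2) / ‖r‖ ^ 2)
      = -1 + 2 * ρ ^ 2 * ‖r - r'‖ ^ 2 / ((‖r‖ ^ 2 + ρ ^ 2) * (‖r'‖ ^ 2 + ρ ^ 2)) := by
    have hA : (‖r‖ ^ 2 + ρ ^ 2) * (‖r'‖ ^ 2 + ρ ^ 2) ≠ 0 := by positivity
    field_simp
  rw [e3]
  have hS2 : (0:ℝ) < Real.sqrt (‖r‖ ^ 2 * ‖r'‖ ^ 2 + 2 * ρ ^ 2 * (inner ℝ r r' : ℝ) + ρ ^ 4) :=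
    Real.sqrt_pos.mpr hD
  have key : ∀ a b c R : ℝ, R ≠ 0 → b ≠ 0 → c ≠ 0 →
      a / R / (b / R * (c / R)) = R * (a / (b * c)) := by
    intro a b c R hR hb hc
    field_simp
  rw [key _ _ _ _ hR.ne' hrr.ne' hS2.ne']
  ring
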